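/- For every positive integer n and every complex s with Re(s) > 0, ∫₂^∞ (1 + f_n(x))·x^(−s−1) dx = (η(s)/s)·∑_{k=1}^n μ(k)/k^s − (1 − 2^(1−s))/s, where f_n(x) = ∑_{k=1}^n μ(k)·ν(x/k). -/

import Mathlib

open MeasureTheory ArithmeticFunction Set

noncomputable def nu (x : ℝ) : ℝ := 2 * Int.fract (x / 2) - Int.fract x

noncomputable def fn (n : ℕ) (x : ℝ) : ℝ :=
  ∑ k ∈ Finset.Icc 1 n, (moebius k : ℝ) * nu (x / k)

noncomputable def eta (s : ℂ) : ℂ :=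
  ∑' k : ℕ, ((2 * ((k : ℂ) + 1) - 1) ^ (-s) - (2 * ((k : ℂ) + 1)) ^ (-s))

lemma nu_floor (x : ℝ) : nu x = (⌊x⌋ : ℝ) - 2 * (⌊x / 2⌋ : ℝ) := by
  simp only [nu, Int.fract]; ring

lemma nu_eq_ite (x : ℝ) : nu x = if Even ⌊x⌋ then 0 else 1 := by
  have h1 : (⌊x⌋ : ℝ) ≤ x := Int.floor_le x
  have h2 : x < ⌊x⌋ + 1 := Int.lt_floor_add_one x
  rcases Int.even_or_odd ⌊x⌋ with h | h
  · obtain ⟨j, hj⟩ := h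
    have hj' : (⌊x⌋ : ℝ) = (j : ℝ) + j := by exact_mod_cast congrArg (Int.cast : ℤ → ℝ) hj
    have hfl : ⌊x / 2⌋ = j := by
      rw [Int.floor_eq_iff]
      constructor
      · push_cast; linarith
      · push_cast; linarith
    rw [nu_floor, hfl, if_pos ⟨j, hj⟩, hj']; ring
  · obtain ⟨j, hj⟩ := h
    have hj' : (⌊x⌋ : ℝ) = 2 * (j : ℝ) + 1 := by exact_mod_cast congrArg (Int.cast : ℤ → ℝ) hj
    have hfl : ⌊x / 2⌋ = j := by
      rw [Int.floor_eq_iff]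
      constructor
      · push_cast; linarith
      · push_cast; linarith
    rw [nu_floor, hfl, if_neg (by rw [Int.not_even_iff_odd]; exact ⟨j, hj⟩), hj']; ring

lemma nu_nonneg (x : ℝ) : 0 ≤ nu x := by
  rw [nu_eq_ite]; split_ifs <;> norm_num

lemma nu_le_one (x : ℝ) : nu x ≤ 1 := by
  rw [nu_eq_ite]; split_ifs <;> norm_num

lemma nu_of_lt_one {u : ℝ} (h0 : 0 ≤ u) (h1 : u < 1) : nu u = 0 := by
  rw [nu_eq_ite, if_pos]
  rw [Int.floor_eq_zero_iff.2 ⟨h0, h1⟩]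
  exact (by decide)

lemma measurable_nu : Measurable nu :=
  (((measurable_id.div_const 2).fract).const_mul 2).sub measurable_fract

lemma nu_mul_indicator (f : ℝ → ℂ) {u : ℝ} (h0 : 0 ≤ u)
    (hni : u ∉ Set.range ((↑) : ℤ → ℝ)) :
    (nu u : ℂ) * f u
      = Set.indicator (⋃ m : ℕ, Ioo ((2 * m + 1 : ℝ)) (2 * m + 2)) f u := by
  by_cases h : u ∈ ⋃ m : ℕ, Ioo ((2 * m + 1 : ℝ)) (2 * m + 2)
  · rw [Set.indicator_of_mem h]
    obtain ⟨m, hm1, hm2⟩ := Set.mem_iUnion.1 h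
    have hf : ⌊u⌋ = 2 * (m : ℤ) + 1 := by
      rw [Int.floor_eq_iff]
      constructor
      · push_cast; linarith
      · push_cast; linarith
    rw [nu_eq_ite, hf, if_neg (by rw [Int.not_even_iff_odd]; exact ⟨m, by ring⟩)]
    norm_num
  · rw [Set.indicator_of_notMem h]
    have hev : Even ⌊u⌋ := by
      by_contra hodd
      obtain ⟨j, hj⟩ := Int.not_even_iff_odd.1 hodd
      have hj0 : 0 ≤ j := by
        have := Int.floor_nonneg.2 h0
        omega
      apply h
      refine Set.mem_iUnion.2 ⟨j.toNat, ?_, ?_⟩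
      · have hle : ((2 * j + 1 : ℤ) : ℝ) ≤ u := by rw [← hj]; exact Int.floor_le u
        have hne : ((2 * j + 1 : ℤ) : ℝ) ≠ u := fun he => hni ⟨_, he⟩
        have hlt : ((2 * j + 1 : ℤ) : ℝ) < u := lt_of_le_of_ne hle hne
        have hcast : ((j.toNat : ℝ)) = (j : ℝ) := by exact_mod_cast congrArg (Int.cast : ℤ → ℝ) (Int.toNat_of_nonneg hj0)
        rw [hcast]
        push_cast at hlt
        linarith
      · have h2 : u < (⌊u⌋ : ℝ) + 1 := Int.lt_floor_add_one u
        rw [hj] at h2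
        have hcast : ((j.toNat : ℝ)) = (j : ℝ) := by exact_mod_cast congrArg (Int.cast : ℤ → ℝ) (Int.toNat_of_nonneg hj0)
        rw [hcast]
        push_cast at h2
        linarith
    rw [nu_eq_ite, if_pos hev]
    norm_num

lemma hs_re {s : ℂ} (hs : 0 < s.re) : (-s - 1).re < -1 := by
  simp only [Complex.sub_re, Complex.neg_re, Complex.one_re]
  linarith

lemma hs_ne {s : ℂ} (hs : 0 < s.re) : s ≠ 0 := by
  intro h; rw [h] at hs; simp at hs

lemma integral_nu_Ioi_one {s : ℂ} (hs : 0 < s.re) :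
    ∫ u in Ioi (1 : ℝ), (nu u : ℂ) * (u : ℂ) ^ (-s - 1) = eta s / s := by
  have hs1 := hs_re hs
  have hs0 := hs_ne hs
  set U : Set ℝ := ⋃ m : ℕ, Ioo ((2 * m + 1 : ℝ)) (2 * m + 2) with hU
  have hUsub : U ⊆ Ioi 1 := by
    rintro x hx
    obtain ⟨m, hm1, hm2⟩ := Set.mem_iUnion.1 hx
    have : (0 : ℝ) ≤ m := Nat.cast_nonneg m
    simp only [mem_Ioi]
    linarith
  have hF : IntegrableOn (fun u : ℝ => (u : ℂ) ^ (-s - 1)) (Ioi 1) :=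
    integrableOn_Ioi_cpow_of_lt hs1 one_pos
  have step1 : ∫ u in Ioi (1 : ℝ), (nu u : ℂ) * (u : ℂ) ^ (-s - 1)
      = ∫ u in Ioi (1 : ℝ), Set.indicator U (fun u : ℝ => (u : ℂ) ^ (-s - 1)) u := by
    apply setIntegral_congr_ae measurableSet_Ioi
    filter_upwards [(Set.countable_range ((↑) : ℤ → ℝ)).ae_notMem volume] with u hu hmem
    rw [hU]
    exact nu_mul_indicator (fun u : ℝ => (u : ℂ) ^ (-s - 1)) (zero_le_one.trans (le_of_lt hmem)) hu
  rw [step1, setIntegral_indicator (MeasurableSet.iUnion fun m => measurableSet_Ioo),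
    Set.inter_eq_right.2 hUsub]
  have hdisj : Pairwise (Function.onFun Disjoint fun m : ℕ => Ioo ((2 * m + 1 : ℝ)) (2 * m + 2)) := by
    have key : ∀ i j : ℕ, i < j →
        Disjoint (Ioo ((2 * i + 1 : ℝ)) (2 * i + 2)) (Ioo ((2 * j + 1 : ℝ)) (2 * j + 2)) := by
      intro i j hij
      rw [Set.disjoint_left]
      rintro x ⟨h1, h2⟩ ⟨h3, h4⟩
      have : (i : ℝ) + 1 ≤ j := by exact_mod_cast hij
      linarith
    intro i j hij
    rcases lt_or_gt_of_ne hij with h | h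
    · exact key _ _ h
    · exact (key _ _ h).symm
  rw [hU, integral_iUnion (fun m => measurableSet_Ioo) hdisj (hF.mono hUsub le_rfl)]
  have hterm : ∀ m : ℕ, (∫ u in Ioo ((2 * m + 1 : ℝ)) (2 * m + 2), (u : ℂ) ^ (-s - 1))
      = (((2 * m + 1 : ℝ) : ℂ) ^ (-s) - ((2 * m + 2 : ℝ) : ℂ) ^ (-s)) / s := by
    intro m
    have hm0 : (0 : ℝ) ≤ m := Nat.cast_nonneg m
    have hle : (2 * m + 1 : ℝ) ≤ 2 * m + 2 := by linarith
    rw [← integral_Ioc_eq_integral_Ioo, ← intervalIntegral.integral_of_le hle,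
      integral_cpow (Or.inr ⟨by intro hcon; exact hs0 (by linear_combination -hcon), by
        rw [Set.uIcc_of_le hle]; rintro ⟨ha, hb⟩; linarith⟩)]
    have hexp : -s - 1 + 1 = -s := by ring
    rw [hexp, div_neg, ← neg_div, neg_sub]
  simp_rw [hterm]
  have heta : eta s = ∑' m : ℕ, (((2 * m + 1 : ℝ) : ℂ) ^ (-s) - ((2 * m + 2 : ℝ) : ℂ) ^ (-s)) := by
    unfold eta
    apply tsum_congr
    intro k
    have e1 : 2 * ((k : ℂ) + 1) - 1 = ((2 * k + 1 : ℝ) : ℂ) := by push_cast; ring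
    have e2 : 2 * ((k : ℂ) + 1) = ((2 * k + 2 : ℝ) : ℂ) := by push_cast; ring
    rw [e1, e2]
  rw [heta]
  exact tsum_div_const

lemma integrableOn_nu_mul {s : ℂ} (hs : 0 < s.re) (c : ℝ) {a : ℝ} (ha : 0 < a) :
    IntegrableOn (fun x : ℝ => (nu (x / c) : ℂ) * (x : ℂ) ^ (-s - 1)) (Ioi a) := by
  apply Integrable.bdd_mul (c := 1) (integrableOn_Ioi_cpow_of_lt (hs_re hs) ha)
  · exact (Complex.measurable_ofReal.comp
      (measurable_nu.comp (measurable_id.div_const c))).aestronglyMeasurable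
  · refine ae_of_all _ (fun x => ?_)
    rw [Complex.norm_real, Real.norm_eq_abs, abs_of_nonneg (nu_nonneg _)]
    exact nu_le_one _

lemma integral_nu_div_k {s : ℂ} (hs : 0 < s.re) {k : ℕ} (hk : 1 ≤ k) :
    ∫ x in Ioi (1 : ℝ), (nu (x / k) : ℂ) * (x : ℂ) ^ (-s - 1)
      = (k : ℂ) ^ (-s) * (eta s / s) := by
  have hk0 : (0 : ℝ) < k := by exact_mod_cast hk
  have hk1 : (1 : ℝ) ≤ k := by exact_mod_cast hk
  have hkc : (k : ℂ) ≠ 0 := Nat.cast_ne_zero.2 (by omega)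
  rw [← Set.Ioc_union_Ioi_eq_Ioi hk1,
    setIntegral_union (Set.Ioc_disjoint_Ioi le_rfl) measurableSet_Ioi
      ((integrableOn_nu_mul hs k one_pos).mono Set.Ioc_subset_Ioi_self le_rfl)
      ((integrableOn_nu_mul hs k one_pos).mono (Set.Ioi_subset_Ioi hk1) le_rfl)]
  have hIoc : ∫ x in Ioc (1 : ℝ) k, (nu (x / k) : ℂ) * (x : ℂ) ^ (-s - 1) = 0 := by
    rw [integral_Ioc_eq_integral_Ioo]
    rw [setIntegral_congr_fun measurableSet_Ioo
      (g := fun _ : ℝ => (0 : ℂ)) ?_, integral_zero]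
    intro x hx
    have hx0 : (0 : ℝ) < x := lt_trans one_pos hx.1
    have : nu (x / k) = 0 := nu_of_lt_one (by positivity) ((div_lt_one hk0).2 hx.2)
    simp [this]
  rw [hIoc, zero_add]
  set g : ℝ → ℂ := fun u => (nu u : ℂ) * (((k : ℝ) * u : ℝ) : ℂ) ^ (-s - 1) with hg
  have step : ∫ x in Ioi (k : ℝ), (nu (x / k) : ℂ) * (x : ℂ) ^ (-s - 1)
      = ∫ x in Ioi (k : ℝ), g ((k : ℝ)⁻¹ * x) := by
    apply setIntegral_congr_fun measurableSet_Ioi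
    intro x _
    have h2 : (k : ℝ)⁻¹ * x = x / k := by ring
    have h3 : (k : ℝ) * (x / k) = x := by field_simp
    simp only [hg, h2, h3]
  rw [step, integral_comp_mul_left_Ioi g _ (inv_pos.2 hk0), inv_inv,
    inv_mul_cancel₀ hk0.ne']
  have step2 : ∫ u in Ioi (1 : ℝ), g u
      = (k : ℂ) ^ (-s - 1) * ∫ u in Ioi (1 : ℝ), (nu u : ℂ) * (u : ℂ) ^ (-s - 1) := by
    rw [← integral_const_mul]
    apply setIntegral_congr_fun measurableSet_Ioi
    intro u hu
    have hu0 : (0 : ℝ) ≤ u := zero_le_one.trans (le_of_lt hu)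
    simp only [hg]
    rw [Complex.ofReal_mul, Complex.mul_cpow_ofReal_nonneg hk0.le hu0, Complex.ofReal_natCast]
    ring
  rw [step2, integral_nu_Ioi_one hs, Complex.real_smul, Complex.ofReal_natCast]
  have : (k : ℂ) * (k : ℂ) ^ (-s - 1) = (k : ℂ) ^ (-s) := by
    calc (k : ℂ) * (k : ℂ) ^ (-s - 1) = (k : ℂ) ^ (1 : ℂ) * (k : ℂ) ^ (-s - 1) := by
          rw [Complex.cpow_one]
      _ = (k : ℂ) ^ (1 + (-s - 1)) := (Complex.cpow_add _ _ hkc).symm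
      _ = (k : ℂ) ^ (-s) := by ring_nf
  rw [← mul_assoc, this]

lemma fn_eq_one {n : ℕ} (hn : 0 < n) {x : ℝ} (hx : x ∈ Set.Ioo (1 : ℝ) 2) : fn n x = 1 := by
  unfold fn
  rw [Finset.sum_eq_single 1]
  · have hfl : ⌊x⌋ = 1 := by
      rw [Int.floor_eq_iff]
      constructor
      · exact_mod_cast hx.1.le
      · push_cast; linarith [hx.2]
    have hnu : nu x = 1 := by
      rw [nu_eq_ite, hfl, if_neg (by decide)]
    simp [hnu]
  · intro k hk hkne
    have hk2 : 2 ≤ k := by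
      have := (Finset.mem_Icc.1 hk).1; omega
    have hk2' : (2 : ℝ) ≤ k := by exact_mod_cast hk2
    have hk0 : (0 : ℝ) < k := by linarith
    have : nu (x / k) = 0 := by
      apply nu_of_lt_one (div_nonneg (by linarith [hx.1]) hk0.le)
      rw [div_lt_one hk0]
      linarith [hx.2]
    simp [this]
  · intro h
    exact absurd (Finset.mem_Icc.2 ⟨le_rfl, hn⟩) h

theorem stmt_13 : ∀ n : ℕ, 0 < n → ∀ s : ℂ, 0 < s.re →
    ∫ x in Set.Ioi (2 : ℝ), (1 + (fn n x : ℂ)) * (x : ℂ) ^ (-s - 1) =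
      (eta s / s) * (∑ k ∈ Finset.Icc 1 n, (moebius k : ℂ) / (k : ℂ) ^ s) -
        (1 - 2 ^ (1 - s)) / s := by
  intro n hn s hs
  have hs1 := hs_re hs
  have hs0 := hs_ne hs
  have hpt : (fun x : ℝ => (1 + (fn n x : ℂ)) * (x : ℂ) ^ (-s - 1))
      = fun x : ℝ => (x : ℂ) ^ (-s - 1) + ∑ k ∈ Finset.Icc 1 n,
          (moebius k : ℂ) * ((nu (x / k) : ℂ) * (x : ℂ) ^ (-s - 1)) := by
    funext x
    simp only [fn]
    push_cast
    rw [add_mul, one_mul, Finset.sum_mul]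
    congr 1
    apply Finset.sum_congr rfl
    intro k _
    ring
  have hSumInt : ∀ a : ℝ, 0 < a → IntegrableOn (fun x : ℝ => ∑ k ∈ Finset.Icc 1 n,
      (moebius k : ℂ) * ((nu (x / k) : ℂ) * (x : ℂ) ^ (-s - 1))) (Ioi a) := by
    intro a ha
    apply integrable_finset_sum
    intro k _
    exact (integrableOn_nu_mul hs k ha).const_mul _
  have hG : ∀ a : ℝ, 0 < a →
      IntegrableOn (fun x : ℝ => (1 + (fn n x : ℂ)) * (x : ℂ) ^ (-s - 1)) (Ioi a) := by
    intro a ha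
    rw [hpt]
    exact (integrableOn_Ioi_cpow_of_lt hs1 ha).add (hSumInt a ha)
  have hsplit : ∫ x in Ioi (1 : ℝ), (1 + (fn n x : ℂ)) * (x : ℂ) ^ (-s - 1)
      = (∫ x in Ioc (1 : ℝ) 2, (1 + (fn n x : ℂ)) * (x : ℂ) ^ (-s - 1))
        + ∫ x in Ioi (2 : ℝ), (1 + (fn n x : ℂ)) * (x : ℂ) ^ (-s - 1) := by
    rw [← setIntegral_union (Set.Ioc_disjoint_Ioi le_rfl) measurableSet_Ioi
      ((hG 1 one_pos).mono Set.Ioc_subset_Ioi_self le_rfl)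
      ((hG 1 one_pos).mono (Set.Ioi_subset_Ioi one_le_two) le_rfl),
      Set.Ioc_union_Ioi_eq_Ioi one_le_two]
  have hIoc : ∫ x in Ioc (1 : ℝ) 2, (1 + (fn n x : ℂ)) * (x : ℂ) ^ (-s - 1)
      = 2 * ((1 - (2 : ℂ) ^ (-s)) / s) := by
    rw [integral_Ioc_eq_integral_Ioo]
    rw [setIntegral_congr_fun measurableSet_Ioo
      (g := fun x : ℝ => (2 : ℂ) * (x : ℂ) ^ (-s - 1)) ?_]
    · rw [integral_const_mul]
      congr 1
      rw [← integral_Ioc_eq_integral_Ioo, ← intervalIntegral.integral_of_le one_le_two,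
        integral_cpow (Or.inr ⟨by intro hcon; exact hs0 (by linear_combination -hcon), by
          rw [Set.uIcc_of_le one_le_two]; rintro ⟨ha, hb⟩; linarith⟩)]
      have hexp : -s - 1 + 1 = -s := by ring
      rw [hexp, div_neg, ← neg_div, neg_sub]
      norm_num
    · intro x hx
      show (1 + (fn n x : ℂ)) * (x : ℂ) ^ (-s - 1) = 2 * (x : ℂ) ^ (-s - 1)
      rw [fn_eq_one hn hx]
      norm_num
  have hIoi1 : ∫ x in Ioi (1 : ℝ), (1 + (fn n x : ℂ)) * (x : ℂ) ^ (-s - 1)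
      = 1 / s + (eta s / s) * ∑ k ∈ Finset.Icc 1 n, (moebius k : ℂ) / (k : ℂ) ^ s := by
    have hsum_eq : ∫ x in Ioi (1 : ℝ), (∑ k ∈ Finset.Icc 1 n,
        (moebius k : ℂ) * ((nu (x / k) : ℂ) * (x : ℂ) ^ (-s - 1)))
        = ∑ k ∈ Finset.Icc 1 n, ∫ x in Ioi (1 : ℝ),
            (moebius k : ℂ) * ((nu (x / k) : ℂ) * (x : ℂ) ^ (-s - 1)) :=
      integral_finset_sum _ (fun k _ => (integrableOn_nu_mul hs k one_pos).const_mul _)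
    rw [hpt, integral_add (integrableOn_Ioi_cpow_of_lt hs1 one_pos) (hSumInt 1 one_pos),
      hsum_eq]
    have h1 : ∫ x in Ioi (1 : ℝ), (x : ℂ) ^ (-s - 1) = 1 / s := by
      rw [integral_Ioi_cpow_of_lt hs1 one_pos]
      have hexp : -s - 1 + 1 = -s := by ring
      rw [hexp, Complex.ofReal_one, Complex.one_cpow]
      rw [neg_div, div_neg, neg_neg]
    rw [h1]
    congr 1
    have hterm : ∀ k ∈ Finset.Icc 1 n,
        (∫ x in Ioi (1 : ℝ), (moebius k : ℂ) * ((nu (x / k) : ℂ) * (x : ℂ) ^ (-s - 1)))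
          = (eta s / s) * ((moebius k : ℂ) / (k : ℂ) ^ s) := by
      intro k hk
      have hk1 : 1 ≤ k := (Finset.mem_Icc.1 hk).1
      have hkc : (k : ℂ) ≠ 0 := Nat.cast_ne_zero.2 (by omega)
      rw [integral_const_mul, integral_nu_div_k hs hk1, Complex.cpow_neg, div_eq_mul_inv]
      ring
    rw [Finset.sum_congr rfl hterm, ← Finset.mul_sum]
  rw [hIoc, hIoi1] at hsplit
  have h2 : (2 : ℂ) ^ (1 - s) = 2 * (2 : ℂ) ^ (-s) := by
    rw [show (1 : ℂ) - s = 1 + (-s) by ring, Complex.cpow_add _ _ two_ne_zero,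
      Complex.cpow_one]
  linear_combination -hsplit - h2 / s
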